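/- In a k-linear triangulated (or pretriangulated dg) category, the left mutation and right mutation of exceptional pairs are mutually inverse: if (E, F) is an exceptional pair, then applying the left mutation followed by the right mutation returns a pair isomorphic to (E, F). Concretely, R_{L_E F}(E) ≅ F, where L_E F = Cone(hom(E,F) ⊗ E → F) and R_G E = Cone(E → hom(E,G)^∨ ⊗ G). -/

import Mathlib

/- STATEMENT 11: In a k-linear (pre)triangulated category, left and right mutations of
exceptional pairs are mutually inverse: if (E, F) is an exceptional pair, the left
mutation gives the pair (L_E F, E), and right-mutating it back returns a pair isomorphic
to (E, F); i.e. the right mutation of the pair (L_E F, E) is isomorphic to F.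

Mutations are encoded by their standard characterization via distinguished triangles:
the left mutation G = L_E F of F over E sits in a distinguished triangle
T → F → G → T⟦1⟧ with T a finite direct sum of shifts of E (namely hom(E,F) ⊗ E) and
with G left-orthogonal to E (Hom(E, G⟦i⟧) = 0 for all i); the right mutation R of the
pair (G, E) sits in a distinguished triangle R → G → T' → R⟦1⟧ with T' a finite direct
sum of shifts of E (namely hom(G,E)^∨ ⊗ E) and Hom(R, E⟦i⟧) = 0 for all i.  The claim
is that R ≅ F. -/

open CategoryTheory Limits Pretriangulated

/-- `T` is a finite direct sum of shifts of `E` (the copower `hom(E,F) ⊗ E` for a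
perfect graded vector space `hom(E,F)` is of this form). -/
def IsSumOfShifts {C : Type*} [Category C] [HasShift C ℤ] [Preadditive C]
    [Limits.HasFiniteBiproducts C] (E T : C) : Prop :=
  ∃ (n : ℕ) (s : Fin n → ℤ), Nonempty (T ≅ ⨁ fun j : Fin n => E⟦s j⟧)


section Aux
variable {C : Type*} [Category C] [Preadditive C] [HasShift C ℤ]
    [HasFiniteBiproducts C] [∀ n : ℤ, (shiftFunctor C n).Additive]

omit [∀ n : ℤ, (shiftFunctor C n).Additive] in
lemma vanish₀ (E X T : C) (hX : ∀ i : ℤ, ∀ f : X ⟶ E⟦i⟧, f = 0)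
    (hT : IsSumOfShifts E T) (f : X ⟶ T) : f = 0 := by
  obtain ⟨n, s, ⟨e⟩⟩ := hT
  have h : f ≫ e.hom = 0 := by
    apply biproduct.hom_ext
    intro j
    rw [zero_comp, Category.assoc]
    exact hX (s j) _
  calc f = (f ≫ e.hom) ≫ e.inv := by simp
  _ = 0 := by rw [h, zero_comp]

lemma IsSumOfShifts.shift {E T : C} (hT : IsSumOfShifts E T) (m : ℤ) :
    IsSumOfShifts E (T⟦m⟧) := by
  obtain ⟨n, s, ⟨e⟩⟩ := hT
  refine ⟨n, fun j => s j + m, ⟨(shiftFunctor C m).mapIso e ≪≫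
    Functor.mapBiproduct (shiftFunctor C m) (fun j : Fin n => E⟦s j⟧) ≪≫
    biproduct.mapIso (fun j => ((shiftFunctorAdd C (s j) m).app E).symm)⟩⟩

lemma vanish₁ (E X T : C) (hX : ∀ i : ℤ, ∀ f : X ⟶ E⟦i⟧, f = 0)
    (hT : IsSumOfShifts E T) (m : ℤ) (f : X ⟶ T⟦m⟧) : f = 0 :=
  vanish₀ E X _ hX (hT.shift m) f

end Aux

theorem left_right_mutation_inverse
    {k : Type*} [Field k] {C : Type*} [Category C] [Preadditive C] [Linear k C]
    [HasZeroObject C] [HasShift C ℤ] [∀ n : ℤ, (shiftFunctor C n).Additive]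
    [Pretriangulated C] [HasFiniteBiproducts C]
    (E F G T T' R : C)
    -- `E` is exceptional: hom(E,E) ≃ k
    (hE0 : ∀ f : E ⟶ E, ∃ c : k, f = c • 𝟙 E)
    (hE1 : ∀ i : ℤ, i ≠ 0 → ∀ f : E ⟶ E⟦i⟧, f = 0)
    -- `F` is exceptional: hom(F,F) ≃ k
    (hF0 : ∀ f : F ⟶ F, ∃ c : k, f = c • 𝟙 F)
    (hF1 : ∀ i : ℤ, i ≠ 0 → ∀ f : F ⟶ F⟦i⟧, f = 0)
    -- (E, F) is an exceptional pair: hom(F,E) ≃ 0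
    (hpair : ∀ i : ℤ, ∀ f : F ⟶ E⟦i⟧, f = 0)
    -- G = L_E F: distinguished triangle hom(E,F) ⊗ E → F → G → ⟦1⟧ with G ⊥ E
    (hT : IsSumOfShifts E T)
    (α : T ⟶ F) (β : F ⟶ G) (γ : G ⟶ T⟦(1 : ℤ)⟧)
    (hdist : Triangle.mk α β γ ∈ distTriang C)
    (hGorth : ∀ i : ℤ, ∀ f : E ⟶ G⟦i⟧, f = 0)
    -- R = right mutation of the pair (G, E): distinguished triangle
    -- R → G → hom(G,E)^∨ ⊗ E → R⟦1⟧ with Hom(R, E⟦i⟧) = 0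
    (hT' : IsSumOfShifts E T')
    (α' : R ⟶ G) (β' : G ⟶ T') (γ' : T' ⟶ R⟦(1 : ℤ)⟧)
    (hdist' : Triangle.mk α' β' γ' ∈ distTriang C)
    (hRorth : ∀ i : ℤ, ∀ f : R ⟶ E⟦i⟧, f = 0) :
    Nonempty (R ≅ F) := by
  have hγ : α' ≫ γ = 0 := vanish₁ E R T hRorth hT 1 _
  obtain ⟨φ, hφ⟩ : ∃ φ : R ⟶ F, α' = φ ≫ β := Triangle.coyoneda_exact₃ _ hdist α' hγ
  replace hφ : α' = φ ≫ β := hφ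
  have hβ' : β ≫ β' = 0 := vanish₀ E F T' hpair hT' _
  obtain ⟨ψ, hψ⟩ : ∃ ψ : F ⟶ R, β = ψ ≫ α' := Triangle.coyoneda_exact₂ _ hdist' β hβ'
  replace hψ : β = ψ ≫ α' := hψ
  have h1 : ψ ≫ φ = 𝟙 F := by
    have hc : ((ψ ≫ φ : F ⟶ F) - 𝟙 F) ≫ β = 0 := by
      rw [Preadditive.sub_comp, Category.id_comp, Category.assoc, ← hφ, ← hψ, sub_self]
    obtain ⟨g, hg⟩ := Triangle.coyoneda_exact₂ _ hdist _ hc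
    have hg0 : g = 0 := vanish₀ E F T hpair hT g
    rw [hg0, zero_comp] at hg
    replace hg : (ψ ≫ φ : F ⟶ F) - 𝟙 F = 0 := hg
    rw [sub_eq_zero] at hg
    exact hg
  have h2 : φ ≫ ψ = 𝟙 R := by
    have hc : ((φ ≫ ψ : R ⟶ R) - 𝟙 R) ≫ α' = 0 := by
      rw [Preadditive.sub_comp, Category.id_comp, Category.assoc, ← hψ, ← hφ, sub_self]
    obtain ⟨g, hg⟩ := Triangle.coyoneda_exact₂ _ (inv_rot_of_distTriang _ hdist') _ hc
    have hg0 : g = 0 := vanish₁ E R T' hRorth hT' (-1) g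
    rw [hg0, zero_comp] at hg
    replace hg : (φ ≫ ψ : R ⟶ R) - 𝟙 R = 0 := hg
    rw [sub_eq_zero] at hg
    exact hg
  exact ⟨⟨φ, ψ, h2, h1⟩⟩
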